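/- arXiv:1807.03764 — 3 statements merged into one kernel-verified Lean document; each statement's English description precedes it below -/
import Mathlib

section
/- Let ω be a permutation, and let (a₁,b₁),…,(a_m,b_m) be a saturated k-Bruhat chain from ω (that is, a_i ≤ k < b_i for all i, and ℓ(ω t_{a₁,b₁}⋯t_{a_i,b_i}) = ℓ(ω) + i for all 1 ≤ i ≤ m). Suppose for some index i with 2 ≤ i ≤ m we have a_{i-1} < a_i. Then the numbers a_{i-1}, b_{i-1}, a_i, b_i need not all be distinct in general, but if b_{i-1} ≠ b_i then {a_{i-1}, b_{i-1}} ∩ {a_i, b_i} = ∅, and swapping the pairs (a_{i-1},b_{i-1}) and (a_i,b_i) yields another saturated k-Bruhat chain from ω to the same permutation ω t_{a₁,b₁}⋯t_{a_m,b_m}. -/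
/-- Coxeter length of a permutation of `Fin n`, as the number of inversions. -/
def len {n : ℕ} (ω : Equiv.Perm (Fin n)) : ℕ :=
  (Finset.univ.filter (fun p : Fin n × Fin n => p.1 < p.2 ∧ ω p.2 < ω p.1)).card

/-- `ω · t_{a₀,b₀} ⋯ t_{a_{i-1},b_{i-1}}`, the `i`-th permutation along the chain. -/
def chainProd {n : ℕ} (ω : Equiv.Perm (Fin n)) (a b : ℕ → Fin n) (i : ℕ) :
    Equiv.Perm (Fin n) :=
  ω * ((List.range i).map (fun t => Equiv.swap (a t) (b t))).prod

/-- `(a,b)` (with indices `0,…,m-1`) is a saturated `k`-Bruhat chain from `ω`: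
each `a_t ≤ k < b_t` and each right multiplication increases the length by 1. -/
def IsSatChain {n : ℕ} (ω : Equiv.Perm (Fin n)) (k : Fin n) (m : ℕ)
    (a b : ℕ → Fin n) : Prop :=
  (∀ t < m, a t ≤ k ∧ k < b t) ∧
  ∀ i ≤ m, len (chainProd ω a b i) = len ω + i

open Finset Equiv

lemma swap_order_char {n : ℕ} {a b : Fin n} (hab : a < b) (x y : Fin n) :
    (x < y ∧ Equiv.swap a b y < Equiv.swap a b x) ↔
      (x = a ∧ y = b) ∨ (x = a ∧ a < y ∧ y < b) ∨ (y = b ∧ a < x ∧ x < b) := by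
  rw [Equiv.swap_apply_def, Equiv.swap_apply_def]
  split_ifs <;> (simp only [Fin.lt_def, Fin.ext_iff] at *) <;> omega

lemma len_mul_swap_eq {n : ℕ} (u : Equiv.Perm (Fin n)) (a b : Fin n) :
    len (u * Equiv.swap a b) =
      (Finset.univ.filter (fun p : Fin n × Fin n =>
        Equiv.swap a b p.1 < Equiv.swap a b p.2 ∧ u p.2 < u p.1)).card := by
  unfold len
  apply Finset.card_equiv ((Equiv.swap a b).prodCongr (Equiv.swap a b))
  intro p
  simp only [Finset.mem_filter]
  simp [Equiv.swap_apply_self, Equiv.Perm.mul_apply]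

lemma len_formula {n : ℕ} (u : Equiv.Perm (Fin n)) {a b : Fin n} (hab : a < b)
    (hu : u a < u b) :
    len (u * Equiv.swap a b) = len u + 1 +
      2 * ((Finset.Ioo a b).filter (fun c => u a < u c ∧ u c < u b)).card := by
  classical
  set s := Equiv.swap a b with hs
  set Du : Finset (Fin n × Fin n) :=
    Finset.univ.filter (fun p => p.1 < p.2 ∧ u p.2 < u p.1) with hDu
  set Dv : Finset (Fin n × Fin n) :=
    Finset.univ.filter (fun p => s p.1 < s p.2 ∧ u p.2 < u p.1) with hDv
  have hlu : len u = Du.card := rfl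
  have hlv : len (u * s) = Dv.card := len_mul_swap_eq u a b
  -- the two difference sets
  have hDuDv : Du \ Dv =
      Finset.univ.filter (fun p : Fin n × Fin n =>
        (p.1 < p.2 ∧ s p.2 < s p.1) ∧ u p.2 < u p.1) := by
    ext p
    simp only [hDu, hDv, Finset.mem_sdiff, Finset.mem_filter, Finset.mem_univ, true_and]
    have hinj : s p.1 = s p.2 ↔ p.1 = p.2 := (Equiv.injective s).eq_iff
    constructor
    · rintro ⟨⟨h1, h2⟩, h3⟩
      refine ⟨⟨h1, ?_⟩, h2⟩
      have hne : s p.2 ≠ s p.1 := fun h => absurd (hinj.mp h.symm) h1.ne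
      rcases lt_or_gt_of_ne hne with h | h
      · exact h
      · exact absurd ⟨h, h2⟩ h3
    · rintro ⟨⟨h1, h2⟩, h3⟩
      exact ⟨⟨h1, h3⟩, fun h => absurd h2 (not_lt.mpr h.1.le)⟩
  have hDvDu : Dv \ Du =
      Finset.univ.filter (fun p : Fin n × Fin n =>
        (p.2 < p.1 ∧ s p.1 < s p.2) ∧ u p.2 < u p.1) := by
    ext p
    simp only [hDu, hDv, Finset.mem_sdiff, Finset.mem_filter, Finset.mem_univ, true_and]
    have hinj : s p.1 = s p.2 ↔ p.1 = p.2 := (Equiv.injective s).eq_iff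
    constructor
    · rintro ⟨⟨h1, h2⟩, h3⟩
      refine ⟨⟨?_, h1⟩, h2⟩
      have hne : p.1 ≠ p.2 := fun h => absurd (hinj.mpr h) h1.ne
      rcases lt_or_gt_of_ne hne with h | h
      · exact absurd ⟨h, h2⟩ h3
      · exact h
    · rintro ⟨⟨h1, h2⟩, h3⟩
      exact ⟨⟨h2, h3⟩, fun h => absurd h1 (not_lt.mpr h.1.le)⟩
  -- counting Du \ Dv
  have hcard1 : (Du \ Dv).card =
      ((Finset.Ioo a b).filter (fun c => u c < u a)).card +
      ((Finset.Ioo a b).filter (fun c => u b < u c)).card := by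
    rw [hDuDv]
    have himg : Finset.univ.filter (fun p : Fin n × Fin n =>
        (p.1 < p.2 ∧ s p.2 < s p.1) ∧ u p.2 < u p.1) =
        ((Finset.Ioo a b).filter (fun c => u c < u a)).image (fun c => (a, c)) ∪
        ((Finset.Ioo a b).filter (fun c => u b < u c)).image (fun c => (c, b)) := by
      ext ⟨x, y⟩
      simp only [Finset.mem_filter, Finset.mem_univ, true_and, Finset.mem_union,
        Finset.mem_image, Finset.mem_Ioo, Prod.mk.injEq, hs, swap_order_char hab]
      constructor
      · rintro ⟨(⟨rfl, rfl⟩ | ⟨rfl, h1, h2⟩ | ⟨rfl, h1, h2⟩), h3⟩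
        · exact absurd h3 (not_lt.mpr hu.le)
        · exact Or.inl ⟨y, ⟨⟨h1, h2⟩, h3⟩, rfl, rfl⟩
        · exact Or.inr ⟨x, ⟨⟨h1, h2⟩, h3⟩, rfl, rfl⟩
      · rintro (⟨c, ⟨⟨h1, h2⟩, h3⟩, rfl, rfl⟩ | ⟨c, ⟨⟨h1, h2⟩, h3⟩, rfl, rfl⟩)
        · exact ⟨Or.inr (Or.inl ⟨rfl, h1, h2⟩), h3⟩
        · exact ⟨Or.inr (Or.inr ⟨rfl, h1, h2⟩), h3⟩
    have hdisj : Disjoint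
        (((Finset.Ioo a b).filter (fun c => u c < u a)).image (fun c => (a, c)))
        (((Finset.Ioo a b).filter (fun c => u b < u c)).image (fun c => (c, b))) := by
      rw [Finset.disjoint_left]
      rintro p hp hq
      simp only [Finset.mem_image, Finset.mem_filter, Finset.mem_Ioo] at hp hq
      obtain ⟨c, ⟨⟨hc1, hc2⟩, _⟩, rfl⟩ := hp
      obtain ⟨d, ⟨⟨hd1, hd2⟩, _⟩, he⟩ := hq
      rw [Prod.mk.injEq] at he
      exact absurd he.1 hd1.ne'
    rw [himg, Finset.card_union_of_disjoint hdisj,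
      Finset.card_image_of_injective _ (fun c d h => congrArg Prod.snd h),
      Finset.card_image_of_injective _ (fun c d h => congrArg Prod.fst h)]
  -- counting Dv \ Du
  have hcard2 : (Dv \ Du).card =
      1 + ((Finset.Ioo a b).filter (fun c => u a < u c)).card +
      ((Finset.Ioo a b).filter (fun c => u c < u b)).card := by
    rw [hDvDu]
    have himg : Finset.univ.filter (fun p : Fin n × Fin n =>
        (p.2 < p.1 ∧ s p.1 < s p.2) ∧ u p.2 < u p.1) =
        insert ((b, a) : Fin n × Fin n)
        (((Finset.Ioo a b).filter (fun c => u a < u c)).image (fun c => (c, a)) ∪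
         ((Finset.Ioo a b).filter (fun c => u c < u b)).image (fun c => (b, c))) := by
      ext ⟨x, y⟩
      simp only [Finset.mem_filter, Finset.mem_univ, true_and, Finset.mem_insert,
        Finset.mem_union, Finset.mem_image, Finset.mem_Ioo, Prod.mk.injEq]
      rw [show ((y < x ∧ s x < s y) ∧ u y < u x) ↔
        ((y = a ∧ x = b) ∨ (y = a ∧ a < x ∧ x < b) ∨ (x = b ∧ a < y ∧ y < b)) ∧ u y < u x from
        by rw [swap_order_char hab y x]]
      constructor
      · rintro ⟨(⟨rfl, rfl⟩ | ⟨rfl, h1, h2⟩ | ⟨rfl, h1, h2⟩), h3⟩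
        · exact Or.inl ⟨rfl, rfl⟩
        · exact Or.inr (Or.inl ⟨x, ⟨⟨h1, h2⟩, h3⟩, rfl, rfl⟩)
        · exact Or.inr (Or.inr ⟨y, ⟨⟨h1, h2⟩, h3⟩, rfl, rfl⟩)
      · rintro (⟨rfl, rfl⟩ | ⟨c, ⟨⟨h1, h2⟩, h3⟩, rfl, rfl⟩ | ⟨c, ⟨⟨h1, h2⟩, h3⟩, rfl, rfl⟩)
        · exact ⟨Or.inl ⟨rfl, rfl⟩, hu⟩
        · exact ⟨Or.inr (Or.inl ⟨rfl, h1, h2⟩), h3⟩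
        · exact ⟨Or.inr (Or.inr ⟨rfl, h1, h2⟩), h3⟩
    have hnm : ((b, a) : Fin n × Fin n) ∉
        (((Finset.Ioo a b).filter (fun c => u a < u c)).image (fun c => (c, a)) ∪
         ((Finset.Ioo a b).filter (fun c => u c < u b)).image (fun c => (b, c))) := by
      intro h
      simp only [Finset.mem_union, Finset.mem_image, Finset.mem_filter, Finset.mem_Ioo,
        Prod.mk.injEq] at h
      rcases h with ⟨c, ⟨⟨h1, h2⟩, _⟩, rfl, _⟩ | ⟨c, ⟨⟨h1, h2⟩, _⟩, _, rfl⟩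
      · exact absurd rfl h2.ne
      · exact absurd rfl h1.ne
    have hdisj : Disjoint
        (((Finset.Ioo a b).filter (fun c => u a < u c)).image (fun c => (c, a)))
        (((Finset.Ioo a b).filter (fun c => u c < u b)).image (fun c => (b, c))) := by
      rw [Finset.disjoint_left]
      rintro p hp hq
      simp only [Finset.mem_image, Finset.mem_filter, Finset.mem_Ioo] at hp hq
      obtain ⟨c, ⟨⟨hc1, hc2⟩, _⟩, rfl⟩ := hp
      obtain ⟨d, ⟨⟨hd1, hd2⟩, _⟩, he⟩ := hq
      rw [Prod.mk.injEq] at he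
      exact absurd he.1.symm hc2.ne
    rw [himg, Finset.card_insert_of_notMem hnm, Finset.card_union_of_disjoint hdisj,
      Finset.card_image_of_injective _ (fun c d h => congrArg Prod.fst h),
      Finset.card_image_of_injective _ (fun c d h => congrArg Prod.snd h)]
    omega
  -- trichotomy splits
  have hsplit1 : ((Finset.Ioo a b).filter (fun c => u a < u c)).card =
      ((Finset.Ioo a b).filter (fun c => u a < u c ∧ u c < u b)).card +
      ((Finset.Ioo a b).filter (fun c => u b < u c)).card := by
    rw [← Finset.card_union_of_disjoint ?hd, ← Finset.filter_or]
    case hd =>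
      rw [Finset.disjoint_left]
      rintro c hc hd
      simp only [Finset.mem_filter] at hc hd
      first
      | exact absurd hc.2.2 (not_lt.mpr hd.2.le)
      | exact absurd hc.2.1 (not_lt.mpr hd.2.le)
    congr 1
    apply Finset.filter_congr
    intro c hc
    simp only [Finset.mem_Ioo] at hc
    have hcb : u c ≠ u b := fun h => absurd (u.injective h) hc.2.ne
    constructor
    · intro h
      rcases lt_or_gt_of_ne hcb with h' | h'
      · exact Or.inl ⟨h, h'⟩
      · exact Or.inr h'
    · rintro (⟨h, _⟩ | h)
      · exact h
      · exact hu.trans h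
  have hsplit2 : ((Finset.Ioo a b).filter (fun c => u c < u b)).card =
      ((Finset.Ioo a b).filter (fun c => u a < u c ∧ u c < u b)).card +
      ((Finset.Ioo a b).filter (fun c => u c < u a)).card := by
    rw [← Finset.card_union_of_disjoint ?hd, ← Finset.filter_or]
    case hd =>
      rw [Finset.disjoint_left]
      rintro c hc hd
      simp only [Finset.mem_filter] at hc hd
      first
      | exact absurd hc.2.2 (not_lt.mpr hd.2.le)
      | exact absurd hc.2.1 (not_lt.mpr hd.2.le)
    congr 1
    apply Finset.filter_congr
    intro c hc
    simp only [Finset.mem_Ioo] at hc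
    have hca : u c ≠ u a := fun h => absurd (u.injective h) hc.1.ne'
    constructor
    · intro h
      rcases lt_or_gt_of_ne hca with h' | h'
      · exact Or.inr h'
      · exact Or.inl ⟨h', h⟩
    · rintro (⟨_, h⟩ | h)
      · exact h
      · exact h.trans hu
  -- combine
  have key1 : Du.card = (Du ∩ Dv).card + (Du \ Dv).card :=
    (Finset.card_inter_add_card_sdiff Du Dv).symm
  have key2 : Dv.card = (Dv ∩ Du).card + (Dv \ Du).card :=
    (Finset.card_inter_add_card_sdiff Dv Du).symm
  have key3 : (Du ∩ Dv).card = (Dv ∩ Du).card := by rw [Finset.inter_comm]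
  omega

lemma len_lt_of_asc {n : ℕ} (u : Equiv.Perm (Fin n)) {a b : Fin n} (hab : a < b)
    (hu : u a < u b) : len u < len (u * Equiv.swap a b) := by
  rw [len_formula u hab hu]; omega

lemma of_len_succ {n : ℕ} (u : Equiv.Perm (Fin n)) {a b : Fin n} (hab : a < b)
    (h : len (u * Equiv.swap a b) = len u + 1) :
    u a < u b ∧ ∀ c, a < c → c < b → ¬(u a < u c ∧ u c < u b) := by
  have hne : u a ≠ u b := fun h' => absurd (u.injective h') hab.ne
  have hu : u a < u b := by
    rcases lt_or_gt_of_ne hne with h' | h'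
    · exact h'
    · exfalso
      have hv : (u * Equiv.swap a b) a < (u * Equiv.swap a b) b := by
        simp only [Equiv.Perm.mul_apply, Equiv.swap_apply_left, Equiv.swap_apply_right]
        exact h'
      have := len_lt_of_asc (u * Equiv.swap a b) hab hv
      rw [mul_assoc, Equiv.swap_mul_self, mul_one] at this
      omega
  refine ⟨hu, ?_⟩
  have hform := len_formula u hab hu
  rw [h] at hform
  have hcard : ((Finset.Ioo a b).filter (fun c => u a < u c ∧ u c < u b)).card = 0 := by omega
  intro c hc1 hc2 hc3
  have : c ∈ (Finset.Ioo a b).filter (fun c => u a < u c ∧ u c < u b) := by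
    simp [Finset.mem_Ioo, hc1, hc2, hc3]
  rw [Finset.card_eq_zero.mp hcard] at this
  exact absurd this (Finset.notMem_empty c)

lemma len_succ_of {n : ℕ} (u : Equiv.Perm (Fin n)) {a b : Fin n} (hab : a < b)
    (hu : u a < u b) (hnomid : ∀ c, a < c → c < b → ¬(u a < u c ∧ u c < u b)) :
    len (u * Equiv.swap a b) = len u + 1 := by
  rw [len_formula u hab hu]
  have : (Finset.Ioo a b).filter (fun c => u a < u c ∧ u c < u b) = ∅ := by
    rw [Finset.filter_eq_empty_iff]
    intro c hc
    rw [Finset.mem_Ioo] at hc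
    exact hnomid c hc.1 hc.2
  rw [this]
  simp

lemma swap_mul_swap_comm {α : Type*} [DecidableEq α] {x y z w : α}
    (h1 : x ≠ z) (h2 : x ≠ w) (h3 : y ≠ z) (h4 : y ≠ w) :
    Equiv.swap x y * Equiv.swap z w = Equiv.swap z w * Equiv.swap x y := by
  ext c
  simp only [Equiv.Perm.mul_apply, Equiv.swap_apply_def]
  split_ifs <;> simp_all

lemma chainProd_succ {n : ℕ} (ω : Equiv.Perm (Fin n)) (a b : ℕ → Fin n) (t : ℕ) :
    chainProd ω a b (t + 1) = chainProd ω a b t * Equiv.swap (a t) (b t) := by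
  unfold chainProd
  rw [List.range_succ, List.map_append, List.prod_append]
  simp [mul_assoc]

lemma chainProd_congr {n : ℕ} (ω : Equiv.Perm (Fin n)) (a b a' b' : ℕ → Fin n)
    {p q : ℕ} (hpq : p ≤ q)
    (h0 : chainProd ω a b p = chainProd ω a' b' p)
    (hag : ∀ t, p ≤ t → t < q → a t = a' t ∧ b t = b' t) :
    chainProd ω a b q = chainProd ω a' b' q := by
  induction q, hpq using Nat.le_induction with
  | base => exact h0
  | succ q hq ih =>
    rw [chainProd_succ, chainProd_succ,
      ih (fun t ht1 ht2 => hag t ht1 (ht2.trans q.lt_succ_self)),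
      (hag q hq q.lt_succ_self).1, (hag q hq q.lt_succ_self).2]
theorem stmt5 {n : ℕ} (ω : Equiv.Perm (Fin n)) (k : Fin n) (m : ℕ)
    (a b : ℕ → Fin n) (hchain : IsSatChain ω k m a b)
    (i : ℕ) (hi1 : 1 ≤ i) (him : i < m)
    (ha : a (i - 1) < a i) (hb : b (i - 1) ≠ b i) :
    (({a (i - 1), b (i - 1)} : Finset (Fin n)) ∩ {a i, b i} = ∅) ∧
    IsSatChain ω k m
      (Function.update (Function.update a (i - 1) (a i)) i (a (i - 1)))
      (Function.update (Function.update b (i - 1) (b i)) i (b (i - 1))) ∧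
    chainProd ω
      (Function.update (Function.update a (i - 1) (a i)) i (a (i - 1)))
      (Function.update (Function.update b (i - 1) (b i)) i (b (i - 1))) m
      = chainProd ω a b m := by
  classical
  obtain ⟨hbd, hlen⟩ := hchain
  set a' := Function.update (Function.update a (i - 1) (a i)) i (a (i - 1)) with ha'def
  set b' := Function.update (Function.update b (i - 1) (b i)) i (b (i - 1)) with hb'def
  have hii : i - 1 ≠ i := by omega
  have hji : i - 1 + 1 = i := by omega
  set A := a (i - 1)
  set B := b (i - 1)
  set A' := a i
  set B' := b i
  have h1 : A ≤ k ∧ k < B := hbd (i - 1) (by omega)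
  have h2 : A' ≤ k ∧ k < B' := hbd i him
  have hAB : A < B := lt_of_le_of_lt h1.1 h1.2
  have hA'B' : A' < B' := lt_of_le_of_lt h2.1 h2.2
  have hAB' : A < B' := lt_of_le_of_lt h1.1 h2.2
  have hA'B : A' < B := lt_of_le_of_lt h2.1 h1.2
  -- values of the updated functions
  have ha'1 : a' (i - 1) = A' := by
    rw [ha'def, Function.update_of_ne hii, Function.update_self]
  have ha'2 : a' i = A := Function.update_self _ _ _
  have ha'3 : ∀ t, t ≠ i - 1 → t ≠ i → a' t = a t := fun t ht1 ht2 => by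
    rw [ha'def, Function.update_of_ne ht2, Function.update_of_ne ht1]
  have hb'1 : b' (i - 1) = B' := by
    rw [hb'def, Function.update_of_ne hii, Function.update_self]
  have hb'2 : b' i = B := Function.update_self _ _ _
  have hb'3 : ∀ t, t ≠ i - 1 → t ≠ i → b' t = b t := fun t ht1 ht2 => by
    rw [hb'def, Function.update_of_ne ht2, Function.update_of_ne ht1]
  set σ := chainProd ω a b (i - 1) with hσdef
  have hσlen : len σ = len ω + (i - 1) := hlen (i - 1) (by omega)
  have hCi : chainProd ω a b i = σ * Equiv.swap A B := by
    conv_lhs => rw [← hji]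
    rw [chainProd_succ]
  have hCi1 : chainProd ω a b (i + 1) = σ * Equiv.swap A B * Equiv.swap A' B' := by
    rw [chainProd_succ, hCi]
  have hlI : len (σ * Equiv.swap A B) = len σ + 1 := by
    have := hlen i him.le
    rw [hCi] at this
    omega
  have hlII : len (σ * Equiv.swap A B * Equiv.swap A' B') =
      len (σ * Equiv.swap A B) + 1 := by
    have := hlen (i + 1) him
    rw [hCi1] at this
    omega
  obtain ⟨hσ1, hnm1⟩ := of_len_succ σ hAB hlI
  obtain ⟨hσ2', hnm2⟩ := of_len_succ (σ * Equiv.swap A B) hA'B' hlII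
  have e1 : (σ * Equiv.swap A B) A' = σ A' := by
    rw [Equiv.Perm.mul_apply, Equiv.swap_apply_of_ne_of_ne ha.ne' hA'B.ne]
  have e2 : (σ * Equiv.swap A B) B' = σ B' := by
    rw [Equiv.Perm.mul_apply, Equiv.swap_apply_of_ne_of_ne hAB'.ne' (Ne.symm hb)]
  have eB : (σ * Equiv.swap A B) B = σ A := by
    rw [Equiv.Perm.mul_apply, Equiv.swap_apply_right]
  rw [e1, e2] at hσ2'
  -- the no-middle property for σ, A', B'
  have hnm : ∀ c, A' < c → c < B' → ¬(σ A' < σ c ∧ σ c < σ B') := by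
    intro c hc1 hc2 ⟨hm1, hm2⟩
    by_cases hcA : c = A
    · subst hcA
      exact absurd hc1 (not_lt.mpr ha.le)
    · by_cases hcB : c = B
      · subst hcB
        have hAA' : σ A ≠ σ A' := fun h => absurd (σ.injective h) ha.ne
        rcases lt_or_gt_of_ne hAA' with h | h
        · exact hnm1 A' ha hA'B ⟨h, hm1⟩
        · exact hnm2 B hc1 hc2 (by rw [e1, e2, eB]; exact ⟨h, hσ1.trans hm2⟩)
      · have ec : (σ * Equiv.swap A B) c = σ c := by
          rw [Equiv.Perm.mul_apply, Equiv.swap_apply_of_ne_of_ne hcA hcB]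
        exact hnm2 c hc1 hc2 (by rw [e1, e2, ec]; exact ⟨hm1, hm2⟩)
  have hlennew : len (σ * Equiv.swap A' B') = len σ + 1 :=
    len_succ_of σ hA'B' hσ2' hnm
  have hcomm : Equiv.swap A B * Equiv.swap A' B' = Equiv.swap A' B' * Equiv.swap A B :=
    swap_mul_swap_comm ha.ne hAB'.ne hA'B.ne' hb
  -- chainProd equalities for the new chain
  have Eq0 : ∀ q, q ≤ i - 1 → chainProd ω a' b' q = chainProd ω a b q := by
    intro q hq
    exact chainProd_congr ω a' b' a b (Nat.zero_le _) (by simp [chainProd])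
      (fun t _ ht2 => ⟨ha'3 t (by omega) (by omega), hb'3 t (by omega) (by omega)⟩)
  have E1 : chainProd ω a' b' (i - 1) = σ := Eq0 (i - 1) le_rfl
  have E2 : chainProd ω a' b' i = σ * Equiv.swap A' B' := by
    conv_lhs => rw [← hji]
    rw [chainProd_succ, E1, ha'1, hb'1]
  have E3 : chainProd ω a' b' (i + 1) = chainProd ω a b (i + 1) := by
    rw [chainProd_succ, E2, ha'2, hb'2, hCi1, mul_assoc, mul_assoc, ← hcomm]
  have E4 : ∀ q, i + 1 ≤ q → chainProd ω a' b' q = chainProd ω a b q := by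
    intro q hq
    exact chainProd_congr ω a' b' a b hq E3
      (fun t ht1 _ => ⟨ha'3 t (by omega) (by omega), hb'3 t (by omega) (by omega)⟩)
  refine ⟨?_, ⟨?_, ?_⟩, E4 m him⟩
  · rw [Finset.eq_empty_iff_forall_notMem]
    intro x hx
    simp only [Finset.mem_inter, Finset.mem_insert, Finset.mem_singleton] at hx
    obtain ⟨h3, h4⟩ := hx
    rcases h3 with rfl | rfl <;> rcases h4 with h4 | h4
    · exact ha.ne h4
    · exact hAB'.ne h4
    · exact hA'B.ne' h4
    · exact hb h4
  · intro t ht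
    by_cases ht1 : t = i - 1
    · subst ht1; rw [ha'1, hb'1]; exact h2
    · by_cases ht2 : t = i
      · subst ht2; rw [ha'2, hb'2]; exact h1
      · rw [ha'3 t ht1 ht2, hb'3 t ht1 ht2]; exact hbd t ht
  · intro q hq
    rcases lt_trichotomy q i with hqi | rfl | hqi
    · rw [Eq0 q (by omega)]
      exact hlen q hq
    · rw [E2, hlennew]
      omega
    · rw [E4 q hqi]
      exact hlen q hq
end

section
/- Two words α = α₁…α_p and β = β₁…β_q over the positive integers give the same permutation s_{α₁}⋯s_{α_p} = s_{β₁}⋯s_{β_q} if and only if they are connected by a finite sequence of braid moves (s_i s_j = s_j s_i for |i−j| ≥ 2, and s_i s_{i+1} s_i = s_{i+1} s_i s_{i+1}) together with insertions or deletions of consecutive equal pairs s_i s_i. -/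
/-- The adjacent transposition `s_i = (i, i+1)` on the natural numbers. -/
def sw (i : ℕ) : Equiv.Perm ℕ := Equiv.swap i (i + 1)

/-- The product of the word `α`, i.e. `s_{α₁} ⋯ s_{α_p}`. -/
def prodWord (l : List ℕ) : Equiv.Perm ℕ := (l.map sw).prod

/-- Elementary moves on words: commutation `s_i s_j = s_j s_i` for `|i-j| ≥ 2`,
braid move `s_i s_{i+1} s_i = s_{i+1} s_i s_{i+1}`, and cancellation of a
consecutive equal pair `s_i s_i` (insertion being the symmetric move). -/
inductive BraidStep : List ℕ → List ℕ → Prop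
  | comm (l r : List ℕ) (i j : ℕ) (h : i + 2 ≤ j) :
      BraidStep (l ++ [i, j] ++ r) (l ++ [j, i] ++ r)
  | braid (l r : List ℕ) (i : ℕ) :
      BraidStep (l ++ [i, i + 1, i] ++ r) (l ++ [i + 1, i, i + 1] ++ r)
  | cancel (l r : List ℕ) (i : ℕ) :
      BraidStep (l ++ [i, i] ++ r) (l ++ r)

abbrev Eqv := Relation.EqvGen BraidStep

@[simp] lemma prodWord_nil : prodWord [] = 1 := rfl
@[simp] lemma prodWord_cons (i : ℕ) (l : List ℕ) :
    prodWord (i :: l) = sw i * prodWord l := by simp [prodWord]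
@[simp] lemma prodWord_append (a b : List ℕ) :
    prodWord (a ++ b) = prodWord a * prodWord b := by simp [prodWord]

lemma sw_sw (i : ℕ) : sw i * sw i = 1 := Equiv.swap_mul_self _ _

lemma sw_apply (i x : ℕ) : sw i x = if x = i then i + 1 else if x = i + 1 then i else x := by
  simp [sw, Equiv.swap_apply_def]

lemma sw_comm {i j : ℕ} (h : i + 2 ≤ j) : sw i * sw j = sw j * sw i := by
  ext x
  simp only [Equiv.Perm.mul_apply, sw_apply]
  split_ifs <;> omega

set_option maxHeartbeats 1000000 in
lemma sw_braid (i : ℕ) : sw i * sw (i + 1) * sw i = sw (i + 1) * sw i * sw (i + 1) := by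
  ext x
  simp only [Equiv.Perm.mul_apply, sw_apply]
  split_ifs <;> omega

lemma step_prod {a b : List ℕ} (h : BraidStep a b) : prodWord a = prodWord b := by
  cases h with
  | comm l r i j h =>
      have key : sw i * (sw j * prodWord r) = sw j * (sw i * prodWord r) := by
        rw [← mul_assoc, sw_comm h, mul_assoc]
      simp only [prodWord_append, prodWord_cons, prodWord_nil, mul_one, mul_assoc, key]
  | braid l r i =>
      have key : sw i * (sw (i+1) * (sw i * prodWord r))
          = sw (i+1) * (sw i * (sw (i+1) * prodWord r)) := by
        simp only [← mul_assoc, sw_braid]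
      simp only [prodWord_append, prodWord_cons, prodWord_nil, mul_one, mul_assoc, key]
  | cancel l r i =>
      have key : sw i * (sw i * prodWord r) = prodWord r := by
        rw [← mul_assoc, sw_sw, one_mul]
      simp only [prodWord_append, prodWord_cons, prodWord_nil, mul_one, mul_assoc, key]

lemma eqv_prod {a b : List ℕ} (h : Eqv a b) : prodWord a = prodWord b := by
  induction h with
  | rel _ _ h => exact step_prod h
  | refl => rfl
  | symm _ _ _ ih => exact ih.symm
  | trans _ _ _ _ _ ih1 ih2 => exact ih1.trans ih2

lemma step_infix (l r : List ℕ) {a b : List ℕ} (h : BraidStep a b) :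
    BraidStep (l ++ a ++ r) (l ++ b ++ r) := by
  cases h with
  | comm l' r' i j h => simpa [List.append_assoc] using BraidStep.comm (l ++ l') (r' ++ r) i j h
  | braid l' r' i => simpa [List.append_assoc] using BraidStep.braid (l ++ l') (r' ++ r) i
  | cancel l' r' i => simpa [List.append_assoc] using BraidStep.cancel (l ++ l') (r' ++ r) i

lemma eqv_infix (l r : List ℕ) {a b : List ℕ} (h : Eqv a b) :
    Eqv (l ++ a ++ r) (l ++ b ++ r) := by
  induction h with
  | rel _ _ h => exact .rel _ _ (step_infix l r h)
  | refl => exact .refl _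
  | symm _ _ _ ih => exact .symm _ _ ih
  | trans _ _ _ _ _ ih1 ih2 => exact .trans _ _ _ ih1 ih2

lemma eqv_cons (j : ℕ) {a b : List ℕ} (h : Eqv a b) : Eqv (j :: a) (j :: b) := by
  simpa using eqv_infix [j] [] h

lemma eqv_swap_pair {i j : ℕ} (l r : List ℕ) (h : j + 2 ≤ i ∨ i + 2 ≤ j) :
    Eqv (l ++ [i, j] ++ r) (l ++ [j, i] ++ r) := by
  rcases h with h | h
  · exact .symm _ _ (.rel _ _ (BraidStep.comm l r j i h))
  · exact .rel _ _ (BraidStep.comm l r i j h)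

/-- Move a letter `i` rightwards past a block `w` of letters all "far" from `i`. -/
lemma swap_move (i : ℕ) : ∀ (w r : List ℕ), (∀ j ∈ w, j + 2 ≤ i ∨ i + 2 ≤ j) →
    Eqv (i :: (w ++ r)) (w ++ (i :: r)) := by
  intro w
  induction w with
  | nil => intro r _; exact .refl _
  | cons j w ih =>
      intro r hw
      have h1 : Eqv (i :: j :: (w ++ r)) (j :: i :: (w ++ r)) := by
        simpa using eqv_swap_pair ([] : List ℕ) (w ++ r) (hw j (by simp))
      have h2 : Eqv (j :: (i :: (w ++ r))) (j :: (w ++ (i :: r))) :=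
        eqv_cons j (ih r (fun x hx => hw x (by simp [hx])))
      exact .trans _ _ _ (by simpa using h1) (by simpa using h2)

/-- The descending word `[t-1, t-2, ..., m]` (empty if `t ≤ m`). -/
def D (m t : ℕ) : List ℕ := (List.range' m (t - m)).reverse

lemma D_nil {m t : ℕ} (h : t ≤ m) : D m t = [] := by
  simp [D, Nat.sub_eq_zero_of_le h]

@[simp] lemma D_self (m : ℕ) : D m m = [] := D_nil le_rfl

lemma D_top {m t : ℕ} (h : m ≤ t) : D m (t + 1) = t :: D m t := by
  have h1 : t + 1 - m = (t - m) + 1 := by omega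
  rw [D, h1, List.range'_concat, List.reverse_append]
  simp [D]
  omega

lemma D_bot {m t : ℕ} (h : m < t) : D m t = D (m + 1) t ++ [m] := by
  have h1 : t - m = (t - (m + 1)) + 1 := by omega
  rw [D, h1, List.range'_succ]
  simp [D]

lemma D_append {m k t : ℕ} (h1 : m ≤ k) (h2 : k ≤ t) : D m t = D k t ++ D m k := by
  have : List.range' m (k - m) ++ List.range' (m + 1 * (k - m)) (t - k) 
      = List.range' m ((t - k) + (k - m)) := Nat.add_comm (k - m) (t - k) ▸ List.range'_append (s := m) (m := k - m) (n := t - k) (step := 1)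
  rw [show m + 1 * (k - m) = k by omega] at this
  rw [D, D, D]
  rw [show t - m = (t - k) + (k - m) by omega, ← this]
  rw [List.reverse_append]

lemma D_mem {j m t : ℕ} (h : j ∈ D m t) : m ≤ j ∧ j < t := by
  simp only [D, List.mem_reverse, List.mem_range'_1] at h
  omega

lemma uD_low {m k : ℕ} (l : ℕ) (h : k < m) : prodWord (D m (m + l)) k = k := by
  induction l with
  | zero => simp
  | succ l ih =>
      rw [show m + (l+1) = (m+l) + 1 by omega, D_top (by omega), prodWord_cons,
        Equiv.Perm.mul_apply, ih, sw_apply]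
      split_ifs <;> omega

lemma uD_high {m k : ℕ} (l : ℕ) (h : m + l < k) : prodWord (D m (m + l)) k = k := by
  induction l with
  | zero => simp
  | succ l ih =>
      rw [show m + (l+1) = (m+l) + 1 by omega, D_top (by omega), prodWord_cons,
        Equiv.Perm.mul_apply, ih (by omega), sw_apply]
      split_ifs <;> omega

lemma uD_self {m : ℕ} (l : ℕ) : prodWord (D m (m + l)) m = m + l := by
  induction l with
  | zero => simp
  | succ l ih =>
      rw [show m + (l+1) = (m+l) + 1 by omega, D_top (by omega), prodWord_cons,
        Equiv.Perm.mul_apply, ih, sw_apply]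
      split_ifs <;> omega

lemma uD_mid {m k : ℕ} (l : ℕ) (h1 : m < k) (h2 : k ≤ m + l) :
    prodWord (D m (m + l)) k = k - 1 := by
  induction l with
  | zero => omega
  | succ l ih =>
      rw [show m + (l+1) = (m+l) + 1 by omega, D_top (by omega), prodWord_cons,
        Equiv.Perm.mul_apply]
      rcases Nat.lt_or_ge k (m + l + 1) with hk | hk
      · rw [ih (by omega), sw_apply]; split_ifs <;> omega
      · have hk' : k = m + l + 1 := by omega
        rw [hk', uD_high l (by omega), sw_apply]; split_ifs <;> omega

lemma uD_self' {m t : ℕ} (h : m ≤ t) : prodWord (D m t) m = t := by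
  have := uD_self (m := m) (t - m); rwa [show m + (t - m) = t by omega] at this

lemma uD_low' {m t k : ℕ} (h : k < m) : prodWord (D m t) k = k := by
  rcases Nat.le_total m t with h' | h'
  · have := uD_low (m := m) (t - m) h; rwa [show m + (t - m) = t by omega] at this
  · rw [D_nil h']; rfl

lemma uD_high' {m t k : ℕ} (h : t < k) (h' : m ≤ t) : prodWord (D m t) k = k := by
  have := uD_high (m := m) (k := k) (t - m) (by omega)
  rwa [show m + (t - m) = t by omega] at this

lemma uD_mid' {m t k : ℕ} (h1 : m < k) (h2 : k ≤ t) : prodWord (D m t) k = k - 1 := by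
  have := uD_mid (m := m) (k := k) (t - m) h1 (by omega)
  rwa [show m + (t - m) = t by omega] at this

lemma perm_inv_eq {σ : Equiv.Perm ℕ} {x y : ℕ} (h : σ y = x) : σ⁻¹ x = y := by
  rw [← h]; exact σ.symm_apply_apply y

lemma uD_inv_top {m t : ℕ} (h : m ≤ t) : (prodWord (D m t))⁻¹ t = m :=
  perm_inv_eq (uD_self' h)

lemma uD_inv_high {m t k : ℕ} (h : t < k) (h' : m ≤ t) : (prodWord (D m t))⁻¹ k = k :=
  perm_inv_eq (uD_high' h h')

lemma c1 (m : ℕ) : ∀ j t, m ≤ t →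
    Eqv ((t+j) :: (D t (t+j) ++ D m (t+j+1))) (D m (t+j) ++ D (t+1) (t+j+1)) := by
  intro j
  induction j with
  | zero =>
      intro t ht
      rw [Nat.add_zero, D_self, D_self, List.nil_append, List.append_nil, D_top ht]
      exact .rel _ _ (by simpa using BraidStep.cancel [] (D m t) t)
  | succ j ih =>
      intro t ht
      have IH := ih (t+1) (by omega)
      rw [show t + (j+1) = t+1+j by omega]
      set N := t + 1 + j with hN
      have htN : t < N := by omega
      -- rewrite the left side
      have e0 : (N :: (D t N ++ D m (N+1)) : List ℕ)
          = N :: (D (t+1) N ++ ([t] ++ (D (t+2) (N+1) ++ ((t+1) :: t :: D m t)))) := by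
        rw [D_bot htN, D_append (show m ≤ t+2 by omega) (show t+2 ≤ N+1 by omega),
          D_top (show m ≤ t+1 by omega), D_top ht]
        simp
      rw [e0]
      -- step A : move the `t` past `D (t+2) (N+1)`
      have stepA : Eqv (N :: (D (t+1) N ++ ([t] ++ (D (t+2) (N+1) ++ ((t+1) :: t :: D m t)))))
          (N :: (D (t+1) N ++ (D (t+2) (N+1) ++ (t :: (t+1) :: t :: D m t)))) := by
        have hfar : ∀ j' ∈ D (t+2) (N+1), j' + 2 ≤ t ∨ t + 2 ≤ j' := by
          intro j' hj'; have := D_mem hj'; omega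
        have := eqv_infix (N :: D (t+1) N) []
          (swap_move t (D (t+2) (N+1)) ((t+1) :: t :: D m t) hfar)
        simpa using this
      -- step B : braid move
      have stepB : Eqv (N :: (D (t+1) N ++ (D (t+2) (N+1) ++ (t :: (t+1) :: t :: D m t))))
          (N :: (D (t+1) N ++ (D (t+2) (N+1) ++ ((t+1) :: t :: (t+1) :: D m t)))) := by
        have := Relation.EqvGen.rel _ _
          (BraidStep.braid (N :: (D (t+1) N ++ D (t+2) (N+1))) (D m t) t)
        simpa using this
      -- step C : move the trailing `t+1` past `D m t`
      have stepC : Eqv (N :: (D (t+1) N ++ (D (t+2) (N+1) ++ ((t+1) :: t :: (t+1) :: D m t))))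
          (N :: (D (t+1) N ++ (D (t+2) (N+1) ++ ((t+1) :: t :: (D m t ++ [t+1]))))) := by
        have hfar : ∀ j' ∈ D m t, j' + 2 ≤ t + 1 ∨ (t+1) + 2 ≤ j' := by
          intro j' hj'; have := D_mem hj'; omega
        have := eqv_infix (N :: (D (t+1) N ++ D (t+2) (N+1) ++ [t+1, t])) []
          (swap_move (t+1) (D m t) [] hfar)
        simpa using this
      -- recognize the result as (N :: (D (t+1) N ++ D m (N+1))) ++ [t+1]
      have e1 : (N :: (D (t+1) N ++ (D (t+2) (N+1) ++ ((t+1) :: t :: (D m t ++ [t+1])))) : List ℕ)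
          = (N :: (D (t+1) N ++ D m (N+1))) ++ [t+1] := by
        rw [D_append (show m ≤ t+2 by omega) (show t+2 ≤ N+1 by omega),
          D_top (show m ≤ t+1 by omega), D_top ht]
        simp
      -- step D : induction hypothesis
      have stepD : Eqv ((N :: (D (t+1) N ++ D m (N+1))) ++ [t+1])
          (D m N ++ D (t+1) (N+1)) := by
        have IH' : Eqv (N :: (D (t+1) N ++ D m (N+1))) (D m N ++ D (t+2) (N+1)) := by
          have e : t + 1 + 1 = t + 2 := rfl
          rw [e] at IH
          exact IH
        have := eqv_infix [] [t+1] IH'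
        have e2 : (D m N ++ D (t+2) (N+1)) ++ [t+1] = D m N ++ D (t+1) (N+1) := by
          rw [D_bot (show t+1 < N+1 by omega)]; simp
        simpa [e2] using this
      exact .trans _ _ _ stepA (.trans _ _ _ stepB (.trans _ _ _ stepC (e1 ▸ stepD)))

/-- The canonical word for a permutation fixing everything `≥ n`. -/
def NF : ℕ → Equiv.Perm ℕ → List ℕ
  | 0, _ => []
  | n+1, π => NF n (π * (prodWord (D (π⁻¹ n) n))⁻¹) ++ D (π⁻¹ n) n

lemma NF_succ (n : ℕ) (π : Equiv.Perm ℕ) :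
    NF (n+1) π = NF n (π * (prodWord (D (π⁻¹ n) n))⁻¹) ++ D (π⁻¹ n) n := rfl

lemma fix_inv_le {n : ℕ} {π : Equiv.Perm ℕ} (h : ∀ k, n + 1 ≤ k → π k = k)
    {v : ℕ} (hv : v ≤ n) : π⁻¹ v ≤ n := by
  by_contra h'
  push_neg at h'
  have h2 := h (π⁻¹ v) (by omega)
  rw [show π (π⁻¹ v) = v from π.apply_symm_apply v] at h2
  omega

lemma NF_fix_step {n : ℕ} {π : Equiv.Perm ℕ} (h : ∀ k, n + 1 ≤ k → π k = k) :
    ∀ k, n ≤ k → (π * (prodWord (D (π⁻¹ n) n))⁻¹) k = k := by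
  intro k hk
  have hm : π⁻¹ n ≤ n := fix_inv_le h le_rfl
  rcases eq_or_lt_of_le hk with rfl | hk'
  · rw [Equiv.Perm.mul_apply, uD_inv_top hm, Equiv.Perm.coe_inv, Equiv.apply_symm_apply]
  · rw [Equiv.Perm.mul_apply, uD_inv_high hk' hm, h k (by omega)]

lemma NF_prod : ∀ (n : ℕ) (π : Equiv.Perm ℕ), (∀ k, n ≤ k → π k = k) →
    prodWord (NF n π) = π
  | 0, π, h => by
      have : π = 1 := Equiv.ext fun k => h k (Nat.zero_le k)
      simp [NF, this]
  | n+1, π, h => by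
      rw [NF_succ, prodWord_append, NF_prod n _ (NF_fix_step h), inv_mul_cancel_right]

lemma NF_letters : ∀ (n : ℕ) (π : Equiv.Perm ℕ), (∀ k, n ≤ k → π k = k) →
    ∀ j ∈ NF n π, j + 2 ≤ n
  | 0, π, h => by simp [NF]
  | n+1, π, h => by
      intro j hj
      rw [NF_succ, List.mem_append] at hj
      rcases hj with hj | hj
      · have := NF_letters n _ (NF_fix_step h) j hj; omega
      · have := D_mem hj; omega

lemma NF_one : ∀ n : ℕ, NF n (1 : Equiv.Perm ℕ) = []
  | 0 => rfl
  | n+1 => by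
      rw [NF_succ, show ((1 : Equiv.Perm ℕ))⁻¹ n = n by simp, D_self]
      simp [NF_one n]

lemma sw_comm_perm {σ : Equiv.Perm ℕ} {i : ℕ} (h1 : σ i = i) (h2 : σ (i+1) = i+1) :
    sw i * σ = σ * sw i := by
  have swi : sw i i = i + 1 := by rw [sw_apply]; simp
  have swi1 : sw i (i+1) = i := by
    rw [sw_apply]; simp
  ext x
  simp only [Equiv.Perm.mul_apply]
  by_cases e1 : x = i
  · subst e1; rw [h1, swi, h2]
  · by_cases e2 : x = i + 1
    · subst e2; rw [h2, swi1, h1]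
    · have hx : sw i x = x := by rw [sw_apply]; simp [e1, e2]
      have n1 : σ x ≠ i := fun e => e1 (σ.injective (e.trans h1.symm))
      have n2 : σ x ≠ i + 1 := fun e => e2 (σ.injective (e.trans h2.symm))
      rw [hx, sw_apply]; simp [n1, n2]

lemma claimW {m m₂ i : ℕ} (hm : m ≤ i + 1) (hm2 : m₂ ≤ i + 1) (hne : m ≠ m₂) :
    Eqv (i :: (D (prodWord (D m (i+1)) m₂) i ++ D m (i+1)))
        (D (prodWord (D m₂ (i+1)) m) i ++ D m₂ (i+1)) := by
  rcases Nat.lt_or_ge m m₂ with hlt | hge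
  · have ea : prodWord (D m (i+1)) m₂ = m₂ - 1 := uD_mid' hlt hm2
    have ea' : prodWord (D m₂ (i+1)) m = m := uD_low' hlt
    rw [ea, ea']
    obtain ⟨j, hj⟩ := Nat.exists_eq_add_of_le (show m₂ - 1 ≤ i by omega)
    have hc := c1 m j (m₂ - 1) (by omega)
    rw [← hj, show m₂ - 1 + 1 = m₂ by omega] at hc
    exact hc
  · have hlt : m₂ < m := by omega
    have ea : prodWord (D m (i+1)) m₂ = m₂ := uD_low' hlt
    have ea' : prodWord (D m₂ (i+1)) m = m - 1 := uD_mid' hlt hm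
    rw [ea, ea']
    obtain ⟨j, hj⟩ := Nat.exists_eq_add_of_le (show m - 1 ≤ i by omega)
    have hc := c1 m₂ j (m - 1) (by omega)
    rw [← hj, show m - 1 + 1 = m by omega] at hc
    have h1 : Eqv (i :: (D m₂ i ++ D m (i+1))) (i :: i :: (D (m-1) i ++ D m₂ (i+1))) :=
      eqv_cons i (.symm _ _ hc)
    have h2 : Eqv (i :: i :: (D (m-1) i ++ D m₂ (i+1))) (D (m-1) i ++ D m₂ (i+1)) :=
      .rel _ _ (by simpa using BraidStep.cancel [] (D (m-1) i ++ D m₂ (i+1)) i)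
    exact .trans _ _ _ h1 h2


lemma key : ∀ (n : ℕ) (π : Equiv.Perm ℕ) (i : ℕ), (∀ k, n ≤ k → π k = k) → i + 2 ≤ n →
    Eqv (i :: NF n π) (NF n (sw i * π)) := by
  intro n
  induction n with
  | zero => intro π i h hi; omega
  | succ N ihN =>
      intro π i h hi
      have swinv : (sw i)⁻¹ = sw i := Equiv.swap_inv _ _
      rcases Nat.lt_or_ge (i + 2) (N + 1) with hA | hB
      -- Case A : i + 2 ≤ N
      · have hiN : i + 2 ≤ N := by omega
        have hτinv : (sw i * π)⁻¹ N = π⁻¹ N := by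
          rw [mul_inv_rev, Equiv.Perm.mul_apply, swinv]
          congr 1
          rw [sw_apply]
          split_ifs <;> omega
        rw [NF_succ, NF_succ, hτinv, mul_assoc]
        have := ihN (π * (prodWord (D (π⁻¹ N) N))⁻¹) i (NF_fix_step h) hiN
        simpa using eqv_infix [] (D (π⁻¹ N) N) this
      -- Case B : N = i + 1
      · have hNi : N = i + 1 := by omega
        subst hNi
        have sw_i_top : sw i (i+1) = i := by rw [sw_apply]; simp
        have sw_i_self : sw i i = i + 1 := by rw [sw_apply]; simp
        have hτ : ∀ k, i+1+1 ≤ k → (sw i * π) k = k := by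
          intro k hk
          rw [Equiv.Perm.mul_apply, h k hk, sw_apply]
          split_ifs <;> omega
        have hτtop : (sw i * π)⁻¹ (i+1) = π⁻¹ i := by
          rw [mul_inv_rev, swinv, Equiv.Perm.mul_apply, sw_i_top]
        have hm : π⁻¹ (i+1) ≤ i + 1 := fix_inv_le h le_rfl
        have hm2 : π⁻¹ i ≤ i + 1 := fix_inv_le h (by omega)
        have hne : π⁻¹ (i+1) ≠ π⁻¹ i := by
          intro e
          have e1 : π (π⁻¹ (i+1)) = i+1 := π.apply_symm_apply _
          rw [e, Equiv.Perm.coe_inv, Equiv.apply_symm_apply] at e1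
          omega
        set m := π⁻¹ (i+1) with hmdef
        set m₂ := π⁻¹ i with hm2def
        have eL : NF (i+1+1) π = NF (i+1) (π * (prodWord (D m (i+1)))⁻¹) ++ D m (i+1) := by
          rw [NF_succ, ← hmdef]
        have eR : NF (i+1+1) (sw i * π)
            = NF (i+1) (sw i * π * (prodWord (D m₂ (i+1)))⁻¹) ++ D m₂ (i+1) := by
          rw [NF_succ, hτtop]
        rw [eL, eR]
        have hπ' : ∀ k, i+1 ≤ k → (π * (prodWord (D m (i+1)))⁻¹) k = k := NF_fix_step h
        have hτ' : ∀ k, i+1 ≤ k → (sw i * π * (prodWord (D m₂ (i+1)))⁻¹) k = k := by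
          have h2 := NF_fix_step hτ
          rwa [hτtop] at h2
        have ha : (π * (prodWord (D m (i+1)))⁻¹)⁻¹ i = prodWord (D m (i+1)) m₂ := by
          rw [mul_inv_rev, inv_inv, Equiv.Perm.mul_apply, ← hm2def]
        have ha' : (sw i * π * (prodWord (D m₂ (i+1)))⁻¹)⁻¹ i = prodWord (D m₂ (i+1)) m := by
          rw [mul_inv_rev, inv_inv, Equiv.Perm.mul_apply, mul_inv_rev, swinv,
            Equiv.Perm.mul_apply, sw_i_self, ← hmdef]
        have eL2 : NF (i+1) (π * (prodWord (D m (i+1)))⁻¹)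
            = NF i (π * (prodWord (D m (i+1)))⁻¹ * (prodWord (D (prodWord (D m (i+1)) m₂) i))⁻¹)
              ++ D (prodWord (D m (i+1)) m₂) i := by
          rw [NF_succ, ha]
        have eR2 : NF (i+1) (sw i * π * (prodWord (D m₂ (i+1)))⁻¹)
            = NF i (sw i * π * (prodWord (D m₂ (i+1)))⁻¹
                * (prodWord (D (prodWord (D m₂ (i+1)) m) i))⁻¹)
              ++ D (prodWord (D m₂ (i+1)) m) i := by
          rw [NF_succ, ha']
        rw [eL2, eR2]
        have hπ'' : ∀ k, i ≤ k →
            (π * (prodWord (D m (i+1)))⁻¹ * (prodWord (D (prodWord (D m (i+1)) m₂) i))⁻¹) k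
              = k := by
          have h2 := NF_fix_step hπ'
          rwa [ha] at h2
        have hW := claimW hm hm2 hne
        have hP := eqv_prod hW
        simp only [prodWord_cons, prodWord_append] at hP
        have hcomm := sw_comm_perm (hπ'' i le_rfl) (hπ'' (i+1) (by omega))
        have hττ : sw i * π * (prodWord (D m₂ (i+1)))⁻¹
              * (prodWord (D (prodWord (D m₂ (i+1)) m) i))⁻¹
            = π * (prodWord (D m (i+1)))⁻¹ * (prodWord (D (prodWord (D m (i+1)) m₂) i))⁻¹ := by
          have h1 : (π * (prodWord (D m (i+1)))⁻¹
                * (prodWord (D (prodWord (D m (i+1)) m₂) i))⁻¹)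
                * (prodWord (D (prodWord (D m₂ (i+1)) m) i) * prodWord (D m₂ (i+1)))
              = sw i * π := by
            rw [← hP, ← mul_assoc, ← hcomm]
            group
          rw [← h1]
          group
        rw [hττ]
        set σ := π * (prodWord (D m (i+1)))⁻¹ * (prodWord (D (prodWord (D m (i+1)) m₂) i))⁻¹
          with hσdef
        have hlet : ∀ j ∈ NF i σ, j + 2 ≤ i ∨ i + 2 ≤ j :=
          fun j hj => Or.inl (NF_letters i σ hπ'' j hj)
        have s1 : Eqv (i :: (NF i σ ++ (D (prodWord (D m (i+1)) m₂) i ++ D m (i+1))))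
            (NF i σ ++ (i :: (D (prodWord (D m (i+1)) m₂) i ++ D m (i+1)))) :=
          swap_move i _ _ hlet
        have s2 : Eqv (NF i σ ++ (i :: (D (prodWord (D m (i+1)) m₂) i ++ D m (i+1))))
            (NF i σ ++ (D (prodWord (D m₂ (i+1)) m) i ++ D m₂ (i+1))) := by
          simpa using eqv_infix (NF i σ) [] hW
        have := Relation.EqvGen.trans _ _ _ s1 s2
        simpa [List.append_assoc] using this

lemma letters_fix {α : List ℕ} {n : ℕ} (h : ∀ j ∈ α, j + 2 ≤ n) :
    ∀ k, n ≤ k → prodWord α k = k := by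
  induction α with
  | nil => intro k hk; rfl
  | cons i α ih =>
      intro k hk
      rw [prodWord_cons, Equiv.Perm.mul_apply, ih (fun j hj => h j (by simp [hj])) k hk,
        sw_apply]
      have := h i (by simp)
      split_ifs <;> omega

lemma eqv_NF (α : List ℕ) (n : ℕ) (h : ∀ j ∈ α, j + 2 ≤ n) :
    Eqv α (NF n (prodWord α)) := by
  induction α with
  | nil => rw [prodWord_nil, NF_one]; exact .refl _
  | cons i α ih =>
      have h1 : Eqv α (NF n (prodWord α)) := ih (fun j hj => h j (by simp [hj]))
      have h2 : Eqv (i :: NF n (prodWord α)) (NF n (sw i * prodWord α)) :=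
        key n (prodWord α) i (letters_fix (fun j hj => h j (by simp [hj]))) (h i (by simp))
      rw [prodWord_cons] at *
      exact .trans _ _ _ (eqv_cons i h1) h2

theorem stmt7 (α β : List ℕ) :
    prodWord α = prodWord β ↔ Relation.EqvGen BraidStep α β := by
  constructor
  · intro hpq
    set n := (α ++ β).sum + 2 with hn
    have hbound : ∀ j ∈ α ++ β, j + 2 ≤ n := by
      intro j hj
      have := List.single_le_sum (fun (x : ℕ) _ => Nat.zero_le x) j hj
      omega
    have hα : Eqv α (NF n (prodWord α)) :=
      eqv_NF α n (fun j hj => hbound j (by simp [hj]))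
    have hβ : Eqv β (NF n (prodWord β)) :=
      eqv_NF β n (fun j hj => hbound j (by simp [hj]))
    rw [hpq] at hα
    exact .trans _ _ _ hα (.symm _ _ hβ)
  · exact eqv_prod
end

section
/- Let ω be a permutation and let t_{i,j}, t_{i',j'} be transpositions with i < j, i' < j', such that ℓ(ω t_{i,j}) = ℓ(ω)+1, ℓ(ω t_{i,j} t_{i',j'}) = ℓ(ω)+2, and {i,j} ∩ {i',j'} = ∅. Then also ℓ(ω t_{i',j'}) = ℓ(ω)+1 and ℓ(ω t_{i',j'} t_{i,j}) = ℓ(ω)+2, and ω t_{i,j} t_{i',j'} = ω t_{i',j'} t_{i,j}. -/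
open Finset Equiv

lemma len_int {n : ℕ} (π : Equiv.Perm (Fin n)) :
    (len π : ℤ) = ∑ p : Fin n × Fin n, (if p.1 < p.2 ∧ π p.2 < π p.1 then 1 else 0) := by
  rw [len, Finset.card_filter]; push_cast; rfl

lemma len_mul_swap {n : ℕ} (π : Equiv.Perm (Fin n)) (x y : Fin n) :
    (len (π * Equiv.swap x y) : ℤ) =
      ∑ p : Fin n × Fin n,
        (if Equiv.swap x y p.1 < Equiv.swap x y p.2 ∧ π p.2 < π p.1 then 1 else 0) := by
  rw [len_int]
  apply Fintype.sum_equiv ((Equiv.swap x y).prodCongr (Equiv.swap x y))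
  intro p
  simp [Equiv.Perm.mul_apply, Equiv.swap_apply_self]
  exact if_congr Iff.rfl rfl rfl

/-- delta contribution of the pair `p` when multiplying `π` on the right by `swap x y`. -/
def dd {n : ℕ} (π : Equiv.Perm (Fin n)) (x y : Fin n) (p : Fin n × Fin n) : ℤ :=
  (if Equiv.swap x y p.1 < Equiv.swap x y p.2 ∧ π p.2 < π p.1 then 1 else 0)
    - (if p.1 < p.2 ∧ π p.2 < π p.1 then 1 else 0)

lemma diff_eq {n : ℕ} (π : Equiv.Perm (Fin n)) (x y : Fin n) :
    (len (π * Equiv.swap x y) : ℤ) - len π = ∑ p : Fin n × Fin n, dd π x y p := by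
  rw [len_mul_swap, len_int, ← Finset.sum_sub_distrib]; rfl

/-- the symmetrized 4-term contribution -/
def e4 {n : ℕ} (π : Equiv.Perm (Fin n)) (x y : Fin n) (p : Fin n × Fin n) : ℤ :=
  dd π x y p + dd π x y (p.2, p.1) +
    dd π x y (Equiv.swap x y p.1, Equiv.swap x y p.2) +
    dd π x y (Equiv.swap x y p.2, Equiv.swap x y p.1)

lemma sum_e4 {n : ℕ} (π : Equiv.Perm (Fin n)) (x y : Fin n) :
    ∑ p : Fin n × Fin n, e4 π x y p = 4 * ∑ p : Fin n × Fin n, dd π x y p := by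
  have h1 : ∑ p : Fin n × Fin n, dd π x y (p.2, p.1) = ∑ p : Fin n × Fin n, dd π x y p := by
    apply Fintype.sum_equiv (Equiv.prodComm _ _); intro p; rfl
  have h2 : ∑ p : Fin n × Fin n, dd π x y (Equiv.swap x y p.1, Equiv.swap x y p.2)
      = ∑ p : Fin n × Fin n, dd π x y p := by
    apply Fintype.sum_equiv ((Equiv.swap x y).prodCongr (Equiv.swap x y))
    intro p; rfl
  have h3 : ∑ p : Fin n × Fin n, dd π x y (Equiv.swap x y p.2, Equiv.swap x y p.1)
      = ∑ p : Fin n × Fin n, dd π x y p := by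
    apply Fintype.sum_equiv (((Equiv.swap x y).prodCongr (Equiv.swap x y)).trans
      (Equiv.prodComm _ _))
    intro p; rfl
  simp only [e4, Finset.sum_add_distrib, h1, h2, h3]; ring

set_option maxHeartbeats 1000000 in
lemma e4_nonneg {n : ℕ} (π : Equiv.Perm (Fin n)) (x y : Fin n) (hxy : x < y)
    (hv : π x < π y) (p : Fin n × Fin n) : 0 ≤ e4 π x y p := by
  obtain ⟨z, w⟩ := p
  have hπ : ∀ a b : Fin n, a ≠ b → ¬ ((π a).val = (π b).val) := fun a b h hh =>
    h (π.injective (Fin.val_injective hh))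
  have hxy' : x.val < y.val := hxy
  have hv' : (π x).val < (π y).val := hv
  have hne : x ≠ y := ne_of_lt hxy
  rcases eq_or_ne z x with hz | hzx
  · rcases eq_or_ne w x with hw | hwx
    · simp [e4, dd, hz, hw]
    · rcases eq_or_ne w y with hw | hwy
      · simp only [e4, dd, hz, hw, Equiv.swap_apply_left, Equiv.swap_apply_right, Fin.lt_def]
        split_ifs <;> omega
      · have hW := hπ _ _ hwx
        have hW' := hπ _ _ hwy
        simp only [e4, dd, hz, Equiv.swap_apply_left, Equiv.swap_apply_right,
          Equiv.swap_apply_of_ne_of_ne hwx hwy, Fin.lt_def]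
        split_ifs <;> omega
  · rcases eq_or_ne z y with hz | hzy
    · rcases eq_or_ne w x with hw | hwx
      · simp only [e4, dd, hz, hw, Equiv.swap_apply_left, Equiv.swap_apply_right, Fin.lt_def]
        split_ifs <;> omega
      · rcases eq_or_ne w y with hw | hwy
        · simp [e4, dd, hz, hw]
        · have hW := hπ _ _ hwx
          have hW' := hπ _ _ hwy
          simp only [e4, dd, hz, Equiv.swap_apply_left, Equiv.swap_apply_right,
            Equiv.swap_apply_of_ne_of_ne hwx hwy, Fin.lt_def]
          split_ifs <;> omega
    · rcases eq_or_ne w x with hw | hwx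
      · have hZ := hπ _ _ hzx
        have hZ' := hπ _ _ hzy
        simp only [e4, dd, hw, Equiv.swap_apply_left, Equiv.swap_apply_right,
          Equiv.swap_apply_of_ne_of_ne hzx hzy, Fin.lt_def]
        split_ifs <;> omega
      · rcases eq_or_ne w y with hw | hwy
        · have hZ := hπ _ _ hzx
          have hZ' := hπ _ _ hzy
          simp only [e4, dd, hw, Equiv.swap_apply_left, Equiv.swap_apply_right,
            Equiv.swap_apply_of_ne_of_ne hzx hzy, Fin.lt_def]
          split_ifs <;> omega
        · simp only [e4, dd, Equiv.swap_apply_of_ne_of_ne hzx hzy,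
            Equiv.swap_apply_of_ne_of_ne hwx hwy, Fin.lt_def]
          split_ifs <;> omega

set_option maxHeartbeats 2000000 in
lemma mono {n : ℕ} (π : Equiv.Perm (Fin n)) (x y : Fin n) (hxy : x < y)
    (hv : π x < π y) : len π + 1 ≤ len (π * Equiv.swap x y) := by
  have hxy' : x.val < y.val := hxy
  have hv' : (π x).val < (π y).val := hv
  have e1 : e4 π x y (x, y) = 2 := by
    simp only [e4, dd, Equiv.swap_apply_left, Equiv.swap_apply_right, Fin.lt_def]
    split_ifs <;> omega
  have e2 : e4 π x y (y, x) = 2 := by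
    simp only [e4, dd, Equiv.swap_apply_left, Equiv.swap_apply_right, Fin.lt_def]
    split_ifs <;> omega
  have hne : ((x, y) : Fin n × Fin n) ≠ (y, x) := by
    simp only [ne_eq, Prod.mk.injEq, not_and]
    intro h; exact absurd h (Fin.ne_of_lt hxy)
  have hsub : ∑ p ∈ ({(x, y), (y, x)} : Finset (Fin n × Fin n)), e4 π x y p
      ≤ ∑ p : Fin n × Fin n, e4 π x y p :=
    Finset.sum_le_sum_of_subset_of_nonneg (Finset.subset_univ _)
      (fun p _ _ => e4_nonneg π x y hxy hv p)
  rw [Finset.sum_pair hne, e1, e2, sum_e4] at hsub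
  have hd := diff_eq π x y
  have : (len π : ℤ) + 1 ≤ (len (π * Equiv.swap x y) : ℤ) := by omega
  exact_mod_cast this

set_option maxHeartbeats 2000000 in
lemma gap {n : ℕ} (π : Equiv.Perm (Fin n)) (x y k : Fin n) (hxk : x < k) (hky : k < y)
    (hv1 : π x < π k) (hv2 : π k < π y) : len π + 3 ≤ len (π * Equiv.swap x y) := by
  have hxy : x < y := lt_trans hxk hky
  have hv : π x < π y := lt_trans hv1 hv2
  have hxy' : x.val < y.val := hxy
  have hxk' : x.val < k.val := hxk
  have hky' : k.val < y.val := hky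
  have hv1' : (π x).val < (π k).val := hv1
  have hv2' : (π k).val < (π y).val := hv2
  have hkx : k ≠ x := Fin.ne_of_gt hxk
  have hkyne : k ≠ y := Fin.ne_of_lt hky
  have e1 : e4 π x y (x, y) = 2 := by
    simp only [e4, dd, Equiv.swap_apply_left, Equiv.swap_apply_right, Fin.lt_def]
    split_ifs <;> omega
  have e2 : e4 π x y (y, x) = 2 := by
    simp only [e4, dd, Equiv.swap_apply_left, Equiv.swap_apply_right, Fin.lt_def]
    split_ifs <;> omega
  have e3 : e4 π x y (x, k) = 2 := by
    simp only [e4, dd, Equiv.swap_apply_left, Equiv.swap_apply_right,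
      Equiv.swap_apply_of_ne_of_ne hkx hkyne, Fin.lt_def]
    split_ifs <;> omega
  have e4' : e4 π x y (k, x) = 2 := by
    simp only [e4, dd, Equiv.swap_apply_left, Equiv.swap_apply_right,
      Equiv.swap_apply_of_ne_of_ne hkx hkyne, Fin.lt_def]
    split_ifs <;> omega
  have e5 : e4 π x y (y, k) = 2 := by
    simp only [e4, dd, Equiv.swap_apply_left, Equiv.swap_apply_right,
      Equiv.swap_apply_of_ne_of_ne hkx hkyne, Fin.lt_def]
    split_ifs <;> omega
  have e6 : e4 π x y (k, y) = 2 := by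
    simp only [e4, dd, Equiv.swap_apply_left, Equiv.swap_apply_right,
      Equiv.swap_apply_of_ne_of_ne hkx hkyne, Fin.lt_def]
    split_ifs <;> omega
  have hS : ∑ p ∈ ({(x, y), (y, x), (x, k), (k, x), (y, k), (k, y)} :
      Finset (Fin n × Fin n)), e4 π x y p = 12 := by
    rw [Finset.sum_insert (by simp [Prod.ext_iff, Fin.ext_iff]; omega),
        Finset.sum_insert (by simp [Prod.ext_iff, Fin.ext_iff]; omega),
        Finset.sum_insert (by simp [Prod.ext_iff, Fin.ext_iff]; omega),
        Finset.sum_insert (by simp [Prod.ext_iff, Fin.ext_iff]; omega),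
        Finset.sum_insert (by simp [Prod.ext_iff, Fin.ext_iff]; omega),
        Finset.sum_singleton, e1, e2, e3, e4', e5, e6]
    ring
  have hsub : ∑ p ∈ ({(x, y), (y, x), (x, k), (k, x), (y, k), (k, y)} :
      Finset (Fin n × Fin n)), e4 π x y p ≤ ∑ p : Fin n × Fin n, e4 π x y p :=
    Finset.sum_le_sum_of_subset_of_nonneg (Finset.subset_univ _)
      (fun p _ _ => e4_nonneg π x y hxy hv p)
  rw [hS, sum_e4] at hsub
  have hd := diff_eq π x y
  have : (len π : ℤ) + 3 ≤ (len (π * Equiv.swap x y) : ℤ) := by omega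
  exact_mod_cast this

lemma support_reduce {n : ℕ} (ω : Equiv.Perm (Fin n)) (i j i' j' : Fin n)
    (h1 : i ≠ i') (h2 : i ≠ j') (h3 : j ≠ i') (h4 : j ≠ j') :
    ∑ p : Fin n × Fin n, (dd (ω * Equiv.swap i j) i' j' p - dd ω i' j' p)
      = ∑ p ∈ ({(i,i'), (i,j'), (j,i'), (j,j'), (i',i), (i',j), (j',i), (j',j)} :
          Finset (Fin n × Fin n)), (dd (ω * Equiv.swap i j) i' j' p - dd ω i' j' p) := by
  symm
  apply Finset.sum_subset (Finset.subset_univ _)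
  intro p _ hpE
  obtain ⟨z, w⟩ := p
  simp only [Finset.mem_insert, Finset.mem_singleton, Prod.mk.injEq, not_or, not_and] at hpE
  obtain ⟨n1, n2, n3, n4, n5, n6, n7, n8⟩ := hpE
  by_cases hz : z = i ∨ z = j
  · have hwn1 : w ≠ i' := by rcases hz with rfl | rfl; exacts [n1 rfl, n3 rfl]
    have hwn2 : w ≠ j' := by rcases hz with rfl | rfl; exacts [n2 rfl, n4 rfl]
    have hzn1 : z ≠ i' := by rcases hz with rfl | rfl; exacts [h1, h3]
    have hzn2 : z ≠ j' := by rcases hz with rfl | rfl; exacts [h2, h4]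
    have e1 : Equiv.swap i' j' z = z := Equiv.swap_apply_of_ne_of_ne hzn1 hzn2
    have e2 : Equiv.swap i' j' w = w := Equiv.swap_apply_of_ne_of_ne hwn1 hwn2
    simp only [dd, e1, e2, sub_self]
  · by_cases hw : w = i ∨ w = j
    · have hzn1 : z ≠ i' := by
        intro hh; rcases hw with rfl | rfl; exacts [n5 hh rfl, n6 hh rfl]
      have hzn2 : z ≠ j' := by
        intro hh; rcases hw with rfl | rfl; exacts [n7 hh rfl, n8 hh rfl]
      have hwn1 : w ≠ i' := by rcases hw with rfl | rfl; exacts [h1, h3]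
      have hwn2 : w ≠ j' := by rcases hw with rfl | rfl; exacts [h2, h4]
      have e1 : Equiv.swap i' j' z = z := Equiv.swap_apply_of_ne_of_ne hzn1 hzn2
      have e2 : Equiv.swap i' j' w = w := Equiv.swap_apply_of_ne_of_ne hwn1 hwn2
      simp only [dd, e1, e2, sub_self]
    · push_neg at hz hw
      have e1 : Equiv.swap i j z = z := Equiv.swap_apply_of_ne_of_ne hz.1 hz.2
      have e2 : Equiv.swap i j w = w := Equiv.swap_apply_of_ne_of_ne hw.1 hw.2
      simp only [dd, Equiv.Perm.mul_apply, e1, e2, sub_self]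

set_option maxHeartbeats 4000000 in
lemma eight_sum {n : ℕ} (ω : Equiv.Perm (Fin n)) (i j i' j' : Fin n)
    (hij : i < j) (hij' : i' < j')
    (h1 : i ≠ i') (h2 : i ≠ j') (h3 : j ≠ i') (h4 : j ≠ j')
    (hc1 : ω i < ω j) (hc3 : ω i' < ω j')
    (f1 : i < i' → i' < j → ¬(ω i < ω i' ∧ ω i' < ω j))
    (f2 : i < j' → j' < j → ¬(ω i < ω j' ∧ ω j' < ω j))
    (f3 : i' < i → i < j' → ¬(ω i' < ω j ∧ ω j < ω j'))
    (f4 : i' < j → j < j' → ¬(ω i' < ω i ∧ ω i < ω j')) :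
    ∑ p ∈ ({(i,i'), (i,j'), (j,i'), (j,j'), (i',i), (i',j), (j',i), (j',j)} :
        Finset (Fin n × Fin n)), (dd (ω * Equiv.swap i j) i' j' p - dd ω i' j' p) = 0 := by
  have hop : ∀ a b : Fin n, a ≠ b → (a : Fin n).val ≠ b.val :=
    fun a b h hh => h (Fin.val_injective hh)
  have hiv := hop _ _ h1; have hjv := hop _ _ h2
  have hkv := hop _ _ h3; have hlv := hop _ _ h4
  have hijv : i.val < j.val := hij
  have hij'v : i'.val < j'.val := hij'
  have hval : ∀ a b : Fin n, a ≠ b → (ω a).val ≠ (ω b).val :=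
    fun a b h hh => h (ω.injective (Fin.val_injective hh))
  have v1 := hval _ _ h1; have v2 := hval _ _ h2
  have v3 := hval _ _ h3; have v4 := hval _ _ h4
  have hc1v : (ω i).val < (ω j).val := hc1
  have hc3v : (ω i').val < (ω j').val := hc3
  have F1 : i.val < i'.val → i'.val < j.val →
      ¬((ω i).val < (ω i').val ∧ (ω i').val < (ω j).val) := fun a b c => f1 a b c
  have F2 : i.val < j'.val → j'.val < j.val →
      ¬((ω i).val < (ω j').val ∧ (ω j').val < (ω j).val) := fun a b c => f2 a b c
  have F3 : i'.val < i.val → i.val < j'.val →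
      ¬((ω i').val < (ω j).val ∧ (ω j).val < (ω j').val) := fun a b c => f3 a b c
  have F4 : i'.val < j.val → j.val < j'.val →
      ¬((ω i').val < (ω i).val ∧ (ω i).val < (ω j').val) := fun a b c => f4 a b c
  have s1 : Equiv.swap i' j' i = i := Equiv.swap_apply_of_ne_of_ne h1 h2
  have s2 : Equiv.swap i' j' j = j := Equiv.swap_apply_of_ne_of_ne h3 h4
  have s3 : Equiv.swap i' j' i' = j' := Equiv.swap_apply_left _ _
  have s4 : Equiv.swap i' j' j' = i' := Equiv.swap_apply_right _ _
  have m1 : (ω * Equiv.swap i j) i = ω j := by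
    simp [Equiv.Perm.mul_apply]
  have m2 : (ω * Equiv.swap i j) j = ω i := by
    simp [Equiv.Perm.mul_apply]
  have m3 : (ω * Equiv.swap i j) i' = ω i' := by
    simp [Equiv.Perm.mul_apply, Equiv.swap_apply_of_ne_of_ne h1.symm h3.symm]
  have m4 : (ω * Equiv.swap i j) j' = ω j' := by
    simp [Equiv.Perm.mul_apply, Equiv.swap_apply_of_ne_of_ne h2.symm h4.symm]
  rw [Finset.sum_insert (by simp [Prod.ext_iff, Fin.ext_iff]; omega),
      Finset.sum_insert (by simp [Prod.ext_iff, Fin.ext_iff]; omega),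
      Finset.sum_insert (by simp [Prod.ext_iff, Fin.ext_iff]; omega),
      Finset.sum_insert (by simp [Prod.ext_iff, Fin.ext_iff]; omega),
      Finset.sum_insert (by simp [Prod.ext_iff, Fin.ext_iff]; omega),
      Finset.sum_insert (by simp [Prod.ext_iff, Fin.ext_iff]; omega),
      Finset.sum_insert (by simp [Prod.ext_iff, Fin.ext_iff]; omega),
      Finset.sum_singleton]
  simp only [dd, s1, s2, s3, s4, m1, m2, m3, m4, Fin.lt_def]
  rcases lt_or_gt_of_ne hiv with q1 | q1 <;>
  rcases lt_or_gt_of_ne hjv with q2 | q2 <;>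
  rcases lt_or_gt_of_ne hkv with q3 | q3 <;>
  rcases lt_or_gt_of_ne hlv with q4 | q4 <;>
  rcases lt_or_gt_of_ne v1 with w1 | w1 <;>
  rcases lt_or_gt_of_ne v2 with w2 | w2 <;>
  rcases lt_or_gt_of_ne v3 with w3 | w3 <;>
  rcases lt_or_gt_of_ne v4 with w4 | w4 <;>
  simp only [q1, q2, q3, q4, w1, w2, w3, w4,
    Nat.lt_asymm q1, Nat.lt_asymm q2, Nat.lt_asymm q3, Nat.lt_asymm q4,
    Nat.lt_asymm w1, Nat.lt_asymm w2, Nat.lt_asymm w3, Nat.lt_asymm w4,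
    and_true, true_and, and_false, false_and, if_true, if_false] <;>
  omega

theorem stmt13 {n : ℕ} (ω : Equiv.Perm (Fin n)) (i j i' j' : Fin n)
    (hij : i < j) (hij' : i' < j')
    (h1 : i ≠ i') (h2 : i ≠ j') (h3 : j ≠ i') (h4 : j ≠ j')
    (hl1 : len (ω * Equiv.swap i j) = len ω + 1)
    (hl2 : len (ω * Equiv.swap i j * Equiv.swap i' j') = len ω + 2) :
    len (ω * Equiv.swap i' j') = len ω + 1 ∧
    len (ω * Equiv.swap i' j' * Equiv.swap i j) = len ω + 2 ∧
    ω * Equiv.swap i j * Equiv.swap i' j' = ω * Equiv.swap i' j' * Equiv.swap i j := by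
  have hinvol : ∀ (π : Equiv.Perm (Fin n)) (x y : Fin n),
      π * Equiv.swap x y * Equiv.swap x y = π := by
    intro π x y
    rw [mul_assoc, Equiv.swap_mul_self, mul_one]
  -- commutation of the two swaps
  have hdisj : (Equiv.swap i j).Disjoint (Equiv.swap i' j') := by
    intro x
    by_cases hx : x = i ∨ x = j
    · right
      rcases hx with rfl | rfl
      · exact Equiv.swap_apply_of_ne_of_ne h1 h2
      · exact Equiv.swap_apply_of_ne_of_ne h3 h4
    · left
      push_neg at hx
      exact Equiv.swap_apply_of_ne_of_ne hx.1 hx.2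
  have hcomm : Equiv.swap i j * Equiv.swap i' j' = Equiv.swap i' j' * Equiv.swap i j :=
    hdisj.commute.eq
  have habba : ω * Equiv.swap i j * Equiv.swap i' j' =
      ω * Equiv.swap i' j' * Equiv.swap i j := by
    rw [mul_assoc, hcomm, ← mul_assoc]
  -- derived order conditions
  have hc1 : ω i < ω j := by
    by_contra hcon
    have hne : ω j ≠ ω i := fun hh => (Fin.ne_of_lt hij) (ω.injective hh).symm
    have hlt : ω j < ω i := lt_of_le_of_ne (not_lt.mp hcon) hne
    have hm : (ω * Equiv.swap i j) i < (ω * Equiv.swap i j) j := by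
      simpa [Equiv.Perm.mul_apply] using hlt
    have := mono (ω * Equiv.swap i j) i j hij hm
    rw [hinvol, hl1] at this
    omega
  have hτb : len (ω * Equiv.swap i j * Equiv.swap i' j')
      = len (ω * Equiv.swap i j) + 1 := by rw [hl1, hl2]
  have hc3 : ω i' < ω j' := by
    have e3 : (ω * Equiv.swap i j) i' = ω i' := by
      simp [Equiv.Perm.mul_apply, Equiv.swap_apply_of_ne_of_ne h1.symm h3.symm]
    have e4 : (ω * Equiv.swap i j) j' = ω j' := by
      simp [Equiv.Perm.mul_apply, Equiv.swap_apply_of_ne_of_ne h2.symm h4.symm]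
    by_contra hcon
    have hne : ω j' ≠ ω i' := fun hh => (Fin.ne_of_lt hij') (ω.injective hh).symm
    have hlt : ω j' < ω i' := lt_of_le_of_ne (not_lt.mp hcon) hne
    have hm : (ω * Equiv.swap i j * Equiv.swap i' j') i'
        < (ω * Equiv.swap i j * Equiv.swap i' j') j' := by
      have g1 : (ω * Equiv.swap i j * Equiv.swap i' j') i'
          = (ω * Equiv.swap i j) j' := by simp [Equiv.Perm.mul_apply]
      have g2 : (ω * Equiv.swap i j * Equiv.swap i' j') j'
          = (ω * Equiv.swap i j) i' := by simp [Equiv.Perm.mul_apply]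
      rw [g1, g2, e3, e4]; exact hlt
    have := mono (ω * Equiv.swap i j * Equiv.swap i' j') i' j' hij' hm
    rw [hinvol, hτb] at this
    omega
  have f1 : i < i' → i' < j → ¬(ω i < ω i' ∧ ω i' < ω j) := by
    intro ha hb ⟨hx, hy⟩
    have := gap ω i j i' ha hb hx hy
    omega
  have f2 : i < j' → j' < j → ¬(ω i < ω j' ∧ ω j' < ω j) := by
    intro ha hb ⟨hx, hy⟩
    have := gap ω i j j' ha hb hx hy
    omega
  have e3' : (ω * Equiv.swap i j) i' = ω i' := by
    simp [Equiv.Perm.mul_apply, Equiv.swap_apply_of_ne_of_ne h1.symm h3.symm]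
  have e4' : (ω * Equiv.swap i j) j' = ω j' := by
    simp [Equiv.Perm.mul_apply, Equiv.swap_apply_of_ne_of_ne h2.symm h4.symm]
  have e1' : (ω * Equiv.swap i j) i = ω j := by simp [Equiv.Perm.mul_apply]
  have e2' : (ω * Equiv.swap i j) j = ω i := by simp [Equiv.Perm.mul_apply]
  have f3 : i' < i → i < j' → ¬(ω i' < ω j ∧ ω j < ω j') := by
    intro ha hb ⟨hx, hy⟩
    have := gap (ω * Equiv.swap i j) i' j' i ha hb
      (by rw [e3', e1']; exact hx) (by rw [e1', e4']; exact hy)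
    omega
  have f4 : i' < j → j < j' → ¬(ω i' < ω i ∧ ω i < ω j') := by
    intro ha hb ⟨hx, hy⟩
    have := gap (ω * Equiv.swap i j) i' j' j ha hb
      (by rw [e3', e2']; exact hx) (by rw [e2', e4']; exact hy)
    omega
  -- main computation
  have hzero : ∑ p : Fin n × Fin n,
      (dd (ω * Equiv.swap i j) i' j' p - dd ω i' j' p) = 0 := by
    rw [support_reduce ω i j i' j' h1 h2 h3 h4]
    exact eight_sum ω i j i' j' hij hij' h1 h2 h3 h4 hc1 hc3 f1 f2 f3 f4
  rw [Finset.sum_sub_distrib, sub_eq_zero] at hzero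
  have hX := diff_eq ω i' j'
  have hY := diff_eq (ω * Equiv.swap i j) i' j'
  rw [hzero] at hY
  rw [← hX] at hY
  have hg1 : len (ω * Equiv.swap i' j') = len ω + 1 := by
    rw [hl1, hl2] at hY
    have : (len (ω * Equiv.swap i' j') : ℤ) = (len ω : ℤ) + 1 := by push_cast at hY ⊢; omega
    exact_mod_cast this
  refine ⟨hg1, ?_, habba⟩
  rw [← habba, hl2]
end
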